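/- Let k ∈ ℝ³ be nonzero and let h be a trace-free real symmetric 3×3 matrix. Then σ_k(rot₂)(h) = 0 if and only if h is a scalar multiple of the matrix 3 k⊗k − |k|² I; that is, the kernel of the symbol of rot₂ on trace-free symmetric matrices equals the image of the symbol of L d, which is span{3 k⊗k − |k|² I}. -/
import Mathlib

open scoped BigOperators

/-- The Levi-Civita symbol `ε_{ijk}` on three indices. -/
def eps : Fin 3 → Fin 3 → Fin 3 → ℝ := fun i j k =>
  if (i, j, k) = ((0 : Fin 3), (1 : Fin 3), (2 : Fin 3)) ∨
     (i, j, k) = ((1 : Fin 3), (2 : Fin 3), (0 : Fin 3)) ∨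
     (i, j, k) = ((2 : Fin 3), (0 : Fin 3), (1 : Fin 3)) then 1
  else if (i, j, k) = ((2 : Fin 3), (1 : Fin 3), (0 : Fin 3)) ∨
     (i, j, k) = ((1 : Fin 3), (0 : Fin 3), (2 : Fin 3)) ∨
     (i, j, k) = ((0 : Fin 3), (2 : Fin 3), (1 : Fin 3)) then -1
  else 0

/-- The Kronecker delta `δ_{ij}`. -/
def kdelta (i j : Fin 3) : ℝ := if i = j then 1 else 0

/-- The cross product on `ℝ³`: `(a × b)_i = Σ_{j,l} ε_{ijl} a_j b_l`. -/
def cross (a b : Fin 3 → ℝ) : Fin 3 → ℝ := fun i => ∑ j, ∑ l, eps i j l * a j * b l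

/-- The symbol of `rot₂`:
`(σ_k(rot₂)(h))_{ij} = Σ_{ℓ,m} ( ε_{iℓm} k_ℓ h_{mj} + ε_{jℓm} k_ℓ h_{mi} )`. -/
def sigRot2 (k : Fin 3 → ℝ) (h : Fin 3 → Fin 3 → ℝ) : Fin 3 → Fin 3 → ℝ :=
  fun i j => ∑ l, ∑ m, (eps i l m * k l * h m j + eps j l m * k l * h m i)

/-- for `k ≠ 0` and trace-free symmetric `h`, `σ_k(rot₂)(h) = 0` iff `h`
is a scalar multiple of `3 k⊗k − |k|² I`; the kernel of the symbol of `rot₂` on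
trace-free symmetric matrices equals the image of the symbol of `L d`. -/
theorem stmt12 (k : Fin 3 → ℝ) (hk : k ≠ 0) (h : Fin 3 → Fin 3 → ℝ)
    (h_symm : ∀ i j, h i j = h j i) (h_tracefree : ∑ i, h i i = 0) :
    (∀ i j, sigRot2 k h i j = 0) ↔
      ∃ c : ℝ, ∀ i j, h i j = c * (3 * k i * k j - (∑ l, k l ^ 2) * kdelta i j) := by
  have hpos : 0 < k 0 ^ 2 + k 1 ^ 2 + k 2 ^ 2 := by
    have hex : ∃ i, k i ≠ 0 := by
      by_contra hc; push_neg at hc; exact hk (funext hc)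
    obtain ⟨i, hi⟩ := hex
    fin_cases i <;> positivity
  have htr : h 0 0 + h 1 1 + h 2 2 = 0 := by
    simpa [Fin.sum_univ_three] using h_tracefree
  have hs01 := h_symm 0 1
  have hs02 := h_symm 0 2
  have hs12 := h_symm 1 2
  constructor
  · intro hz
    have e00 : k 1 * h 2 0 + k 1 * h 2 0 - k 2 * h 1 0 - k 2 * h 1 0 = 0 := by
      have := hz 0 0
      simp [sigRot2, Fin.sum_univ_three, eps, Prod.mk.injEq] at this
      linarith
    have e01 : - k 0 * h 2 0 + k 1 * h 2 1 + k 2 * h 0 0 - k 2 * h 1 1 = 0 := by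
      have := hz 0 1
      simp [sigRot2, Fin.sum_univ_three, eps, Prod.mk.injEq] at this
      linarith
    have e02 : k 0 * h 1 0 - k 1 * h 0 0 + k 1 * h 2 2 - k 2 * h 1 2 = 0 := by
      have := hz 0 2
      simp [sigRot2, Fin.sum_univ_three, eps, Prod.mk.injEq] at this
      linarith
    have e11 : - k 0 * h 2 1 - k 0 * h 2 1 + k 2 * h 0 1 + k 2 * h 0 1 = 0 := by
      have := hz 1 1
      simp [sigRot2, Fin.sum_univ_three, eps, Prod.mk.injEq] at this
      linarith
    have e12 : k 0 * h 1 1 - k 0 * h 2 2 - k 1 * h 0 1 + k 2 * h 0 2 = 0 := by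
      have := hz 1 2
      simp [sigRot2, Fin.sum_univ_three, eps, Prod.mk.injEq] at this
      linarith
    have e22 : k 0 * h 1 2 + k 0 * h 1 2 - k 1 * h 0 2 - k 1 * h 0 2 = 0 := by
      have := hz 2 2
      simp [sigRot2, Fin.sum_univ_three, eps, Prod.mk.injEq] at this
      linarith
    have hD : (2 * (k 0 ^ 2 + k 1 ^ 2 + k 2 ^ 2) ^ 2) ≠ 0 := by positivity
    have key00 : h 0 0 = (h 0 0 * k 0 * k 0 + h 0 1 * k 0 * k 1 + h 0 2 * k 0 * k 2 + h 1 0 * k 1 * k 0 + h 1 1 * k 1 * k 1 + h 1 2 * k 1 * k 2 + h 2 0 * k 2 * k 0 + h 2 1 * k 2 * k 1 + h 2 2 * k 2 * k 2) / (2 * (k 0 ^ 2 + k 1 ^ 2 + k 2 ^ 2) ^ 2) * (3 * k 0 * k 0 - (k 0 ^ 2 + k 1 ^ 2 + k 2 ^ 2) * kdelta 0 0) := by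
      rw [show kdelta 0 0 = (1 : ℝ) by simp [kdelta], div_mul_eq_mul_div, eq_div_iff hD]
      linear_combination (k 2^3) * e01 + (k 1^2 * k 2) * e01 + (4 * k 0^2 * k 2) * e01 + (-1 * k 1 * k 2^2) * e02 + (-1 * k 1^3) * e02 + (-4 * k 0^2 * k 1) * e02 + (3 * k 0 * k 1 * k 2) * e11 + (3 * k 0 * k 2^2) * e12 + (-3 * k 0 * k 1^2) * e12 + (-3 * k 0 * k 1 * k 2) * e22 + (-2 * k 0 * k 1 * k 2^2) * hs01 + (-2 * k 0 * k 1^3) * hs01 + (-2 * k 0^3 * k 1) * hs01 + (-2 * k 0 * k 2^3) * hs02 + (-2 * k 0 * k 1^2 * k 2) * hs02 + (-2 * k 0^3 * k 2) * hs02 + (k 2^4) * htr + (2 * k 1^2 * k 2^2) * htr + (k 1^4) * htr + (k 0^2 * k 2^2) * htr + (k 0^2 * k 1^2) * htr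
    have key01 : h 0 1 = (h 0 0 * k 0 * k 0 + h 0 1 * k 0 * k 1 + h 0 2 * k 0 * k 2 + h 1 0 * k 1 * k 0 + h 1 1 * k 1 * k 1 + h 1 2 * k 1 * k 2 + h 2 0 * k 2 * k 0 + h 2 1 * k 2 * k 1 + h 2 2 * k 2 * k 2) / (2 * (k 0 ^ 2 + k 1 ^ 2 + k 2 ^ 2) ^ 2) * (3 * k 0 * k 1 - (k 0 ^ 2 + k 1 ^ 2 + k 2 ^ 2) * kdelta 0 1) := by
      rw [show kdelta 0 1 = (0 : ℝ) by simp [kdelta], div_mul_eq_mul_div, eq_div_iff hD]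
      linear_combination (-1 * k 2^3) * e00 + (-1 * k 1^2 * k 2) * e00 + (-2 * k 0^2 * k 2) * e00 + (k 0 * k 1 * k 2) * e01 + (-1 * k 0 * k 1^2) * e02 + (2 * k 0^3) * e02 + (2 * k 1^2 * k 2) * e11 + (2 * k 1 * k 2^2) * e12 + (-2 * k 1^3) * e12 + (k 0^2 * k 1) * e12 + (-2 * k 1^2 * k 2) * e22 + (k 0^2 * k 2) * e22 + (2 * k 2^4) * hs01 + (2 * k 1^2 * k 2^2) * hs01 + (4 * k 0^2 * k 2^2) * hs01 + (2 * k 0^2 * k 1^2) * hs01 + (2 * k 0^4) * hs01 + (-2 * k 1 * k 2^3) * hs02 + (-2 * k 1^3 * k 2) * hs02 + (-2 * k 0^2 * k 1 * k 2) * hs02 + (-1 * k 0 * k 1 * k 2^2) * htr + (-1 * k 0 * k 1^3) * htr + (-1 * k 0^3 * k 1) * htr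
    have key02 : h 0 2 = (h 0 0 * k 0 * k 0 + h 0 1 * k 0 * k 1 + h 0 2 * k 0 * k 2 + h 1 0 * k 1 * k 0 + h 1 1 * k 1 * k 1 + h 1 2 * k 1 * k 2 + h 2 0 * k 2 * k 0 + h 2 1 * k 2 * k 1 + h 2 2 * k 2 * k 2) / (2 * (k 0 ^ 2 + k 1 ^ 2 + k 2 ^ 2) ^ 2) * (3 * k 0 * k 2 - (k 0 ^ 2 + k 1 ^ 2 + k 2 ^ 2) * kdelta 0 2) := by
      rw [show kdelta 0 2 = (0 : ℝ) by simp [kdelta], div_mul_eq_mul_div, eq_div_iff hD]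
      linear_combination (k 1 * k 2^2) * e00 + (k 1^3) * e00 + (4 * k 0^2 * k 1) * e00 + (k 0 * k 2^2) * e01 + (4 * k 0 * k 1^2) * e01 + (-2 * k 0^3) * e01 + (3 * k 0 * k 1 * k 2) * e02 + (2 * k 1 * k 2^2) * e11 + (2 * k 1^3) * e11 + (-1 * k 0^2 * k 1) * e11 + (2 * k 2^3) * e12 + (2 * k 1^2 * k 2) * e12 + (-1 * k 0^2 * k 2) * e12 + (-2 * k 1 * k 2^3) * hs01 + (-2 * k 1^3 * k 2) * hs01 + (-2 * k 0^2 * k 1 * k 2) * hs01 + (2 * k 1^2 * k 2^2) * hs02 + (2 * k 1^4) * hs02 + (2 * k 0^2 * k 2^2) * hs02 + (4 * k 0^2 * k 1^2) * hs02 + (2 * k 0^4) * hs02 + (-1 * k 0 * k 2^3) * htr + (-1 * k 0 * k 1^2 * k 2) * htr + (-1 * k 0^3 * k 2) * htr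
    have key10 : h 1 0 = (h 0 0 * k 0 * k 0 + h 0 1 * k 0 * k 1 + h 0 2 * k 0 * k 2 + h 1 0 * k 1 * k 0 + h 1 1 * k 1 * k 1 + h 1 2 * k 1 * k 2 + h 2 0 * k 2 * k 0 + h 2 1 * k 2 * k 1 + h 2 2 * k 2 * k 2) / (2 * (k 0 ^ 2 + k 1 ^ 2 + k 2 ^ 2) ^ 2) * (3 * k 1 * k 0 - (k 0 ^ 2 + k 1 ^ 2 + k 2 ^ 2) * kdelta 1 0) := by
      rw [show kdelta 1 0 = (0 : ℝ) by simp [kdelta], div_mul_eq_mul_div, eq_div_iff hD]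
      linear_combination (-1 * k 2^3) * e00 + (-1 * k 1^2 * k 2) * e00 + (-2 * k 0^2 * k 2) * e00 + (k 0 * k 1 * k 2) * e01 + (-1 * k 0 * k 1^2) * e02 + (2 * k 0^3) * e02 + (2 * k 1^2 * k 2) * e11 + (2 * k 1 * k 2^2) * e12 + (-2 * k 1^3) * e12 + (k 0^2 * k 1) * e12 + (-2 * k 1^2 * k 2) * e22 + (k 0^2 * k 2) * e22 + (-2 * k 1^2 * k 2^2) * hs01 + (-2 * k 1^4) * hs01 + (-2 * k 0^2 * k 1^2) * hs01 + (-2 * k 1 * k 2^3) * hs02 + (-2 * k 1^3 * k 2) * hs02 + (-2 * k 0^2 * k 1 * k 2) * hs02 + (-1 * k 0 * k 1 * k 2^2) * htr + (-1 * k 0 * k 1^3) * htr + (-1 * k 0^3 * k 1) * htr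
    have key11 : h 1 1 = (h 0 0 * k 0 * k 0 + h 0 1 * k 0 * k 1 + h 0 2 * k 0 * k 2 + h 1 0 * k 1 * k 0 + h 1 1 * k 1 * k 1 + h 1 2 * k 1 * k 2 + h 2 0 * k 2 * k 0 + h 2 1 * k 2 * k 1 + h 2 2 * k 2 * k 2) / (2 * (k 0 ^ 2 + k 1 ^ 2 + k 2 ^ 2) ^ 2) * (3 * k 1 * k 1 - (k 0 ^ 2 + k 1 ^ 2 + k 2 ^ 2) * kdelta 1 1) := by
      rw [show kdelta 1 1 = (1 : ℝ) by simp [kdelta], div_mul_eq_mul_div, eq_div_iff hD]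
      linear_combination (-4 * k 0 * k 1 * k 2) * e00 + (-1 * k 2^3) * e01 + (-4 * k 1^2 * k 2) * e01 + (-1 * k 0^2 * k 2) * e01 + (-3 * k 1 * k 2^2) * e02 + (3 * k 0^2 * k 1) * e02 + (-1 * k 0 * k 1 * k 2) * e11 + (k 0 * k 2^2) * e12 + (4 * k 0 * k 1^2) * e12 + (k 0^3) * e12 + (2 * k 0 * k 1 * k 2) * e22 + (4 * k 0 * k 1 * k 2^2) * hs01 + (2 * k 0 * k 1^3) * hs01 + (2 * k 0^3 * k 1) * hs01 + (-2 * k 0 * k 1^2 * k 2) * hs02 + (-2 * k 1 * k 2^3) * hs12 + (-2 * k 1^3 * k 2) * hs12 + (k 2^4) * htr + (k 1^2 * k 2^2) * htr + (2 * k 0^2 * k 2^2) * htr + (k 0^2 * k 1^2) * htr + (k 0^4) * htr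
    have key12 : h 1 2 = (h 0 0 * k 0 * k 0 + h 0 1 * k 0 * k 1 + h 0 2 * k 0 * k 2 + h 1 0 * k 1 * k 0 + h 1 1 * k 1 * k 1 + h 1 2 * k 1 * k 2 + h 2 0 * k 2 * k 0 + h 2 1 * k 2 * k 1 + h 2 2 * k 2 * k 2) / (2 * (k 0 ^ 2 + k 1 ^ 2 + k 2 ^ 2) ^ 2) * (3 * k 1 * k 2 - (k 0 ^ 2 + k 1 ^ 2 + k 2 ^ 2) * kdelta 1 2) := by
      rw [show kdelta 1 2 = (0 : ℝ) by simp [kdelta], div_mul_eq_mul_div, eq_div_iff hD]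
      linear_combination (-1 * k 0 * k 2^2) * e00 + (3 * k 0 * k 1^2) * e00 + (-2 * k 0^3) * e00 + (-1 * k 1 * k 2^2) * e01 + (2 * k 1^3) * e01 + (-6 * k 0^2 * k 1) * e01 + (-2 * k 2^3) * e02 + (k 1^2 * k 2) * e02 + (-4 * k 0^2 * k 2) * e02 + (-3 * k 0 * k 1^2) * e11 + (-5 * k 0 * k 1 * k 2) * e12 + (2 * k 0 * k 1^2) * e22 + (k 0^3) * e22 + (-2 * k 0 * k 1^2 * k 2) * hs01 + (2 * k 0 * k 1 * k 2^2) * hs02 + (4 * k 0 * k 1^3) * hs02 + (2 * k 0^3 * k 1) * hs02 + (2 * k 1^2 * k 2^2) * hs12 + (2 * k 1^4) * hs12 + (-1 * k 1 * k 2^3) * htr + (-1 * k 1^3 * k 2) * htr + (-1 * k 0^2 * k 1 * k 2) * htr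
    have key20 : h 2 0 = (h 0 0 * k 0 * k 0 + h 0 1 * k 0 * k 1 + h 0 2 * k 0 * k 2 + h 1 0 * k 1 * k 0 + h 1 1 * k 1 * k 1 + h 1 2 * k 1 * k 2 + h 2 0 * k 2 * k 0 + h 2 1 * k 2 * k 1 + h 2 2 * k 2 * k 2) / (2 * (k 0 ^ 2 + k 1 ^ 2 + k 2 ^ 2) ^ 2) * (3 * k 2 * k 0 - (k 0 ^ 2 + k 1 ^ 2 + k 2 ^ 2) * kdelta 2 0) := by
      rw [show kdelta 2 0 = (0 : ℝ) by simp [kdelta], div_mul_eq_mul_div, eq_div_iff hD]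
      linear_combination (k 1 * k 2^2) * e00 + (k 1^3) * e00 + (4 * k 0^2 * k 1) * e00 + (k 0 * k 2^2) * e01 + (4 * k 0 * k 1^2) * e01 + (-2 * k 0^3) * e01 + (3 * k 0 * k 1 * k 2) * e02 + (2 * k 1 * k 2^2) * e11 + (2 * k 1^3) * e11 + (-1 * k 0^2 * k 1) * e11 + (2 * k 2^3) * e12 + (2 * k 1^2 * k 2) * e12 + (-1 * k 0^2 * k 2) * e12 + (-2 * k 1 * k 2^3) * hs01 + (-2 * k 1^3 * k 2) * hs01 + (-2 * k 0^2 * k 1 * k 2) * hs01 + (-2 * k 2^4) * hs02 + (-2 * k 1^2 * k 2^2) * hs02 + (-2 * k 0^2 * k 2^2) * hs02 + (-1 * k 0 * k 2^3) * htr + (-1 * k 0 * k 1^2 * k 2) * htr + (-1 * k 0^3 * k 2) * htr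
    have key21 : h 2 1 = (h 0 0 * k 0 * k 0 + h 0 1 * k 0 * k 1 + h 0 2 * k 0 * k 2 + h 1 0 * k 1 * k 0 + h 1 1 * k 1 * k 1 + h 1 2 * k 1 * k 2 + h 2 0 * k 2 * k 0 + h 2 1 * k 2 * k 1 + h 2 2 * k 2 * k 2) / (2 * (k 0 ^ 2 + k 1 ^ 2 + k 2 ^ 2) ^ 2) * (3 * k 2 * k 1 - (k 0 ^ 2 + k 1 ^ 2 + k 2 ^ 2) * kdelta 2 1) := by
      rw [show kdelta 2 1 = (0 : ℝ) by simp [kdelta], div_mul_eq_mul_div, eq_div_iff hD]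
      linear_combination (-3 * k 0 * k 2^2) * e00 + (k 0 * k 1^2) * e00 + (-1 * k 0^3) * e00 + (-1 * k 1 * k 2^2) * e01 + (2 * k 1^3) * e01 + (-2 * k 0^2 * k 1) * e01 + (-2 * k 2^3) * e02 + (k 1^2 * k 2) * e02 + (-2 * k 0 * k 2^2) * e11 + (-3 * k 0 * k 1^2) * e11 + (-1 * k 0^3) * e11 + (-1 * k 0 * k 1 * k 2) * e12 + (4 * k 0 * k 2^3) * hs01 + (2 * k 0 * k 1^2 * k 2) * hs01 + (2 * k 0^3 * k 2) * hs01 + (-2 * k 0 * k 1 * k 2^2) * hs02 + (-2 * k 2^4) * hs12 + (-2 * k 1^2 * k 2^2) * hs12 + (-1 * k 1 * k 2^3) * htr + (-1 * k 1^3 * k 2) * htr + (-1 * k 0^2 * k 1 * k 2) * htr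
    have key22 : h 2 2 = (h 0 0 * k 0 * k 0 + h 0 1 * k 0 * k 1 + h 0 2 * k 0 * k 2 + h 1 0 * k 1 * k 0 + h 1 1 * k 1 * k 1 + h 1 2 * k 1 * k 2 + h 2 0 * k 2 * k 0 + h 2 1 * k 2 * k 1 + h 2 2 * k 2 * k 2) / (2 * (k 0 ^ 2 + k 1 ^ 2 + k 2 ^ 2) ^ 2) * (3 * k 2 * k 2 - (k 0 ^ 2 + k 1 ^ 2 + k 2 ^ 2) * kdelta 2 2) := by
      rw [show kdelta 2 2 = (1 : ℝ) by simp [kdelta], div_mul_eq_mul_div, eq_div_iff hD]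
      linear_combination (4 * k 0 * k 1 * k 2) * e00 + (3 * k 1^2 * k 2) * e01 + (-3 * k 0^2 * k 2) * e01 + (4 * k 1 * k 2^2) * e02 + (k 1^3) * e02 + (k 0^2 * k 1) * e02 + (-2 * k 0 * k 1 * k 2) * e11 + (-4 * k 0 * k 2^2) * e12 + (-1 * k 0 * k 1^2) * e12 + (-1 * k 0^3) * e12 + (k 0 * k 1 * k 2) * e22 + (-2 * k 0 * k 1 * k 2^2) * hs01 + (2 * k 0 * k 2^3) * hs02 + (4 * k 0 * k 1^2 * k 2) * hs02 + (2 * k 0^3 * k 2) * hs02 + (2 * k 1 * k 2^3) * hs12 + (2 * k 1^3 * k 2) * hs12 + (k 1^2 * k 2^2) * htr + (k 1^4) * htr + (k 0^2 * k 2^2) * htr + (2 * k 0^2 * k 1^2) * htr + (k 0^4) * htr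
    refine ⟨(h 0 0 * k 0 * k 0 + h 0 1 * k 0 * k 1 + h 0 2 * k 0 * k 2 + h 1 0 * k 1 * k 0 + h 1 1 * k 1 * k 1 + h 1 2 * k 1 * k 2 + h 2 0 * k 2 * k 0 + h 2 1 * k 2 * k 1 + h 2 2 * k 2 * k 2) / (2 * (k 0 ^ 2 + k 1 ^ 2 + k 2 ^ 2) ^ 2), ?_⟩
    intro i j
    simp only [Fin.sum_univ_three]
    fin_cases i <;> fin_cases j
    exacts [key00, key01, key02, key10, key11, key12, key20, key21, key22]
  · rintro ⟨c, hc⟩ i j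
    fin_cases i <;> fin_cases j <;>
      · simp [sigRot2, Fin.sum_univ_three, hc, eps, kdelta, Prod.mk.injEq]
        ring
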